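/- Let $T$ be a tree on $n \ge 2$ vertices rooted at a vertex $v$, with height $h$. For each level $\ell$ with $1 \le \ell \le h-1$, let $L_\ell$ be a set of at most $q$ vertices of largest degree among vertices at distance $\ell$ from $v$ (taking all of them if there are at most $q$). Then $\operatorname{Z}_q(T) \le \deg(v) + \sum_{\ell=1}^{h-1} \sum_{a \in L_\ell} \max\{0, \deg(a) - 2\}$. -/

import Mathlib

open SimpleGraph

namespace ZqGame

variable {V : Type*}

/-- A blue vertex `v` forces the white vertex `w`, where only white vertices in
`Wallow` are taken into account (used for Rule 3, where play is restricted to the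
subgraph induced by the blue set together with the returned white components). -/
def ForceIn (G : SimpleGraph V) (B : Set V) (Wallow : Set V) (v w : V) : Prop :=
  v ∈ B ∧ w ∉ B ∧ w ∈ Wallow ∧ G.Adj v w ∧
    ∀ u, G.Adj v u → u ∉ B → u ∈ Wallow → u = w

/-- The standard color change rule: `v` is blue and `w` is its unique white neighbor. -/
def Force (G : SimpleGraph V) (B : Set V) (v w : V) : Prop :=
  ForceIn G B Set.univ v w

/-- The white connected component of `G - B` containing the white vertex `w`. -/
def WhiteComp (G : SimpleGraph V) (B : Set V) (w : V) : Set V :=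
  {x | Relation.ReflTransGen (fun a b => G.Adj a b ∧ a ∉ B ∧ b ∉ B) w x}

/-- `W` is a white component, i.e. a connected component of `G - B`. -/
def IsWhiteComp (G : SimpleGraph V) (B : Set V) (W : Set V) : Prop :=
  ∃ w, w ∉ B ∧ W = WhiteComp G B w

/-- An active vertex: a blue vertex with at least two white neighbors. -/
def Active (G : SimpleGraph V) (B : Set V) (a : V) : Prop :=
  a ∈ B ∧ ∃ w₁ w₂, w₁ ≠ w₂ ∧ G.Adj a w₁ ∧ G.Adj a w₂ ∧ w₁ ∉ B ∧ w₂ ∉ B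

end ZqGame

namespace ZqGame

variable {V : Type*}

/-- `Win G q B t` : in the `Z_q`-forcing game on `G` starting from blue set `B`,
Blue has a strategy spending at most `t` tokens that colors every vertex blue
against any (adversarial) play by White.
* `all` : every vertex is already blue.
* `rule1` : spend one token to color an arbitrary vertex blue.
* `rule2` : a blue vertex with exactly one white neighbor forces it, for free.
* `rule3` : Blue announces a collection `𝒲` of at least `q + 1` white components;
  for every nonempty sub-collection `𝒮` that White may return, Blue can perform a
  Rule 2 force (`vf 𝒮 → wf 𝒮`) on the subgraph induced by `B` together with `⋃ 𝒮`,
  and continue from the resulting position. -/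
inductive Win (G : SimpleGraph V) (q : ℕ) : Set V → ℕ → Prop
  | all (B : Set V) (t : ℕ) : (∀ v, v ∈ B) → Win G q B t
  | rule1 (B : Set V) (t : ℕ) (v : V) : Win G q (insert v B) t → Win G q B (t + 1)
  | rule2 (B : Set V) (t : ℕ) (v w : V) :
      Force G B v w → Win G q (insert w B) t → Win G q B t
  | rule3 (B : Set V) (t : ℕ) (𝒲 : Finset (Set V))
      (vf wf : Finset (Set V) → V) :
      (∀ W ∈ 𝒲, IsWhiteComp G B W) → q + 1 ≤ 𝒲.card →
      (∀ 𝒮 : Finset (Set V), 𝒮 ⊆ 𝒲 → 𝒮.Nonempty →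
        ForceIn G B (⋃₀ (𝒮 : Set (Set V))) (vf 𝒮) (wf 𝒮)) →
      (∀ 𝒮 : Finset (Set V), 𝒮 ⊆ 𝒲 → 𝒮.Nonempty →
        Win G q (insert (wf 𝒮) B) t) →
      Win G q B t

/-- `Z_q(G, B)` : the minimum number of additional tokens Blue must spend to win the
`Z_q`-forcing game on `G` starting from blue set `B`. -/
noncomputable def cost (G : SimpleGraph V) (q : ℕ) (B : Set V) : ℕ :=
  sInf {t | Win G q B t}

/-- `Z_q(G)` : the `Z_q`-forcing number of `G`. -/
noncomputable def Zq (G : SimpleGraph V) (q : ℕ) : ℕ := cost G q ∅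

end ZqGame




section ZqAux

open SimpleGraph Finset ZqGame

open scoped Classical

set_option linter.unusedSectionVars false

namespace ZqAux

variable {V : Type*} [Fintype V] [DecidableEq V] (G : SimpleGraph V) (v : V)

/-- `x` is a child of `p` in the tree rooted at `v`. -/
def chd (p x : V) : Prop := G.Adj p x ∧ G.dist v x = G.dist v p + 1

variable {G v}

lemma unique_path (hT : G.IsTree) {a b : V} (P Q : G.Walk a b) (hP : P.IsPath)
    (hQ : Q.IsPath) : P = Q :=
  ((hT.existsUnique_path a b).unique hP hQ)

lemma dist_add_dist_le_of_mem {a b x : V} (w : G.Walk a b) (hx : x ∈ w.support) :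
    G.dist a x + G.dist x b ≤ w.length := by
  have hspec := w.take_spec hx
  have hlen : (w.takeUntil x hx).length + (w.dropUntil x hx).length = w.length := by
    rw [← Walk.length_append, hspec]
  calc G.dist a x + G.dist x b ≤ (w.takeUntil x hx).length + (w.dropUntil x hx).length :=
        Nat.add_le_add (dist_le _) (dist_le _)
    _ = w.length := hlen

lemma exists_parent (hT : G.IsTree) {x : V} (hx : x ≠ v) : ∃ p, chd G v p x := by
  have hconn := hT.isConnected
  have hd : G.dist v x ≠ 0 := by
    simpa [hconn.dist_eq_zero_iff] using fun h => hx h.symm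
  obtain ⟨w, hwlen⟩ := hconn.exists_walk_length_eq_dist v x
  obtain ⟨p, hadj, w', hw'⟩ := Walk.exists_eq_cons_of_ne hx w.reverse
  have hlen' : w'.length = G.dist v x - 1 := by
    have h1 : w.reverse.length = G.dist v x := by rw [Walk.length_reverse, hwlen]
    rw [hw', Walk.length_cons] at h1
    omega
  refine ⟨p, hadj.symm, ?_⟩
  have h1 : G.dist v p ≤ G.dist v x - 1 := by
    have := dist_le w'.reverse
    rwa [Walk.length_reverse, hlen'] at this
  have h2 : G.dist v x ≤ G.dist v p + 1 := by
    have := hconn.dist_triangle (v := p) (u := v) (w := x)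
    have hpx : G.dist p x = 1 := dist_eq_one_iff_adj.mpr hadj.symm
    omega
  omega

lemma parent_unique (hT : G.IsTree) {p₁ p₂ x : V} (h₁ : chd G v p₁ x) (h₂ : chd G v p₂ x) :
    p₁ = p₂ := by
  have hconn := hT.isConnected
  obtain ⟨hadj₁, hd₁⟩ := h₁
  obtain ⟨hadj₂, hd₂⟩ := h₂
  obtain ⟨w₁, hw₁, hl₁⟩ := hconn.exists_path_of_dist p₁ v
  obtain ⟨w₂, hw₂, hl₂⟩ := hconn.exists_path_of_dist p₂ v
  have hx₁ : x ∉ w₁.support := by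
    intro hmem
    have := dist_add_dist_le_of_mem w₁ hmem
    rw [hl₁] at this
    have hxv : G.dist x v = G.dist v x := dist_comm
    have : G.dist p₁ v = G.dist v p₁ := dist_comm
    omega
  have hx₂ : x ∉ w₂.support := by
    intro hmem
    have := dist_add_dist_le_of_mem w₂ hmem
    rw [hl₂] at this
    have hxv : G.dist x v = G.dist v x := dist_comm
    have : G.dist p₂ v = G.dist v p₂ := dist_comm
    omega
  have hR : Walk.cons hadj₁.symm w₁ = Walk.cons hadj₂.symm w₂ :=
    unique_path hT _ _ (hw₁.cons hx₁) (hw₂.cons hx₂)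
  have := congrArg (fun w => Walk.getVert w 1) hR
  simpa [Walk.getVert_cons _ _ one_ne_zero] using this

lemma adj_lev (hT : G.IsTree) {x y : V} (hadj : G.Adj x y) :
    G.dist v y = G.dist v x + 1 ∨ G.dist v x = G.dist v y + 1 := by
  have hconn := hT.isConnected
  have h1 : G.dist v y ≤ G.dist v x + 1 := by
    have := hconn.dist_triangle (u := v) (v := x) (w := y)
    have : G.dist x y = 1 := dist_eq_one_iff_adj.mpr hadj
    omega
  have h2 : G.dist v x ≤ G.dist v y + 1 := by
    have := hconn.dist_triangle (u := v) (v := y) (w := x)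
    have : G.dist y x = 1 := dist_eq_one_iff_adj.mpr hadj.symm
    omega
  by_contra hcon
  push_neg at hcon
  have heq : G.dist v x = G.dist v y := by omega
  obtain ⟨w₁, hw₁, hl₁⟩ := hconn.exists_path_of_dist x v
  obtain ⟨w₂, hw₂, hl₂⟩ := hconn.exists_path_of_dist y v
  have hx₂ : x ∉ w₂.support := by
    intro hmem
    have := dist_add_dist_le_of_mem w₂ hmem
    rw [hl₂] at this
    have hyx : G.dist y x = 1 := dist_eq_one_iff_adj.mpr hadj.symm
    have hxv : G.dist x v = G.dist v x := dist_comm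
    have hyv : G.dist y v = G.dist v y := dist_comm
    omega
  have hR : Walk.cons hadj w₂ = w₁ :=
    unique_path hT _ _ (hw₂.cons hx₂) hw₁
  have := congrArg Walk.length hR
  rw [Walk.length_cons, hl₁, hl₂] at this
  have hxv : G.dist x v = G.dist v x := dist_comm
  have hyv : G.dist y v = G.dist v y := dist_comm
  omega

lemma dist_lt_card (hconn : G.Connected) (x : V) : G.dist v x < Fintype.card V := by
  obtain ⟨w, hw, hl⟩ := hconn.exists_path_of_dist v x
  rw [← hl]
  exact hw.length_lt

/-! ### Positions -/

variable (G v)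

/-- Downward-closed (ancestor-closed) blue sets containing the root. -/
def DC (B : Set V) : Prop := v ∈ B ∧ ∀ p x, chd G v p x → x ∈ B → p ∈ B

/-- White neighbours of a vertex. -/
noncomputable def wnb (B : Set V) (a : V) : Finset V :=
  Finset.univ.filter (fun x => G.Adj a x ∧ x ∉ B)

/-- The weight of a vertex. -/
noncomputable def val (x : V) : ℕ := if x = v then G.degree x - 1 else G.degree x - 2

/-- Vertices at level `ℓ` with at least one non-blue child. -/
noncomputable def ND (B : Set V) (ℓ : ℕ) : Finset V :=
  Finset.univ.filter (fun p => G.dist v p = ℓ ∧ ∃ x, chd G v p x ∧ x ∉ B)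

/-- Best possible total weight of at most `q` not-done vertices at level `ℓ`. -/
noncomputable def tops (q : ℕ) (B : Set V) (ℓ : ℕ) : ℕ :=
  (((ND G v B ℓ).powerset).filter (fun S => S.card ≤ q)).sup (fun S => ∑ x ∈ S, val G v x)

/-- The potential of a position. -/
noncomputable def price (q : ℕ) (B : Set V) : ℕ :=
  ∑ ℓ ∈ Finset.range (Fintype.card V), tops G v q B ℓ

variable {G v}

lemma mem_wnb {B : Set V} {a x : V} : x ∈ wnb G B a ↔ G.Adj a x ∧ x ∉ B := by
  simp [wnb]

lemma white_child (hT : G.IsTree) {B : Set V} (hDC : DC G v B) {a x : V} (ha : a ∈ B)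
    (hx : x ∉ B) (hadj : G.Adj a x) : chd G v a x := by
  rcases adj_lev hT hadj with h | h
  · exact ⟨hadj, h⟩
  · exact absurd (hDC.2 x a ⟨hadj.symm, h⟩ ha) hx

lemma DC_union (hT : G.IsTree) {B : Set V} (hDC : DC G v B) {W : Finset V}
    (hW : ∀ x ∈ W, ∃ p, p ∈ B ∧ chd G v p x) : DC G v (B ∪ ↑W) := by
  refine ⟨Or.inl hDC.1, ?_⟩
  rintro p x hpx (hx | hx)
  · exact Or.inl (hDC.2 p x hpx hx)
  · obtain ⟨p', hp', hp'x⟩ := hW x hx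
    exact Or.inl (parent_unique hT hpx hp'x ▸ hp')

lemma DC_insert (hT : G.IsTree) {B : Set V} (hDC : DC G v B) {p c : V} (hp : p ∈ B)
    (hpc : chd G v p c) : DC G v (insert c B) := by
  have := DC_union hT hDC (W := {c}) (by intro x hx; rw [Finset.mem_singleton] at hx
                                         exact ⟨p, hp, hx ▸ hpc⟩)
  simpa using this

/-- Chains of white children. -/
def ancW (G : SimpleGraph V) (v : V) (B : Set V) (c x : V) : Prop :=
  Relation.ReflTransGen (fun p y => chd G v p y ∧ p ∉ B ∧ y ∉ B) c x

lemma comp_sub (hT : G.IsTree) {B : Set V} {c : V} (hc : c ∉ B) {p0 : V}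
    (hp0 : p0 ∈ B) (hp0c : chd G v p0 c) :
    ∀ x ∈ WhiteComp G B c, ancW G v B c x := by
  intro x hx
  simp only [WhiteComp, Set.mem_setOf_eq] at hx
  induction hx with
  | refl => exact Relation.ReflTransGen.refl
  | tail hcb hstep ih =>
    rename_i b y
    obtain ⟨hadj, hbB, hyB⟩ := hstep
    rcases adj_lev hT hadj with hby | hyb
    · exact ih.tail ⟨⟨hadj, hby⟩, hbB, hyB⟩
    · -- y is the parent of b
      by_cases hbc : b = c
      · subst hbc
        exact absurd (parent_unique hT ⟨hadj.symm, hyb⟩ hp0c ▸ hp0) hyB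
      · rcases ih.cases_tail with h | ⟨x', hx', hrel⟩
        · exact absurd h hbc
        · have : x' = y := parent_unique hT ⟨hrel.1.1, hrel.1.2⟩ ⟨hadj.symm, hyb⟩
          exact this ▸ hx'

lemma root_eq (hT : G.IsTree) {B : Set V} {c c' : V} (hc : c ∉ B) {p0 : V}
    (hp0 : p0 ∈ B) (hp0c : chd G v p0 c) (hc' : c' ∉ B) {p1 : V} (hp1 : p1 ∈ B)
    (hp1c : chd G v p1 c') (hmem : c' ∈ WhiteComp G B c) : c' = c := by
  have hanc := comp_sub hT hc hp0 hp0c c' hmem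
  rcases hanc.cases_tail with h | ⟨x', hx', hrel⟩
  · exact h
  · exact absurd (parent_unique hT hrel.1 hp1c ▸ hp1) hrel.2.1

/-! ### Game infrastructure -/

lemma Win_mono {G : SimpleGraph V} {q : ℕ} {B : Set V} {t : ℕ} (hw : Win G q B t) :
    ∀ t', t ≤ t' → Win G q B t' := by
  induction hw with
  | all B t hB => exact fun t' _ => .all B t' hB
  | rule1 B t w hw ih =>
    intro t' ht'
    have h1 : Win G q (insert w B) (t' - 1) := ih _ (by omega)
    have h2 := Win.rule1 B (t' - 1) w h1
    have : t' - 1 + 1 = t' := by omega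
    rwa [this] at h2
  | rule2 B t u w hf hw ih =>
    intro t' ht'
    exact Win.rule2 B t' u w hf (ih t' ht')
  | rule3 B t 𝒲 vf wf hcomp hcard hforce hwin ih =>
    intro t' ht'
    exact Win.rule3 B t' 𝒲 vf wf hcomp hcard hforce (fun 𝒮 h1 h2 => ih 𝒮 h1 h2 t' ht')

lemma rule1_iter {G : SimpleGraph V} {q : ℕ} (S : Finset V) :
    ∀ (B : Set V) (t : ℕ), Win G q (B ∪ ↑S) t → Win G q B (t + S.card) := by
  induction S using Finset.induction_on with
  | empty => intro B t h; simpa using h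
  | @insert a S ha ih =>
    intro B t h
    have h1 : Win G q (insert a (B ∪ ↑S)) t := by
      rwa [Finset.coe_insert, Set.union_insert] at h
    have h2 : Win G q (B ∪ ↑S) (t + 1) := Win.rule1 _ _ _ h1
    have h3 := ih B (t + 1) h2
    refine Win_mono h3 _ ?_
    rw [Finset.card_insert_of_notMem ha]
    omega

/-! ### Frontier lemmas -/

lemma blue_frontier (hT : G.IsTree) {B : Set V} (hDC : DC G v B) :
    ∀ n (x : V), G.dist v x ≤ n → x ∉ B →
      ∃ p c, p ∈ B ∧ chd G v p c ∧ c ∉ B ∧ G.dist v p < G.dist v x := by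
  intro n
  induction n with
  | zero =>
    intro x hx hxB
    have : x = v := by
      have := (hT.isConnected.dist_eq_zero_iff (u := v) (v := x)).mp (by omega)
      exact this.symm
    exact absurd (this ▸ hDC.1) hxB
  | succ n ih =>
    intro x hx hxB
    have hxv : x ≠ v := fun h => hxB (h ▸ hDC.1)
    obtain ⟨p, hp⟩ := exists_parent hT hxv
    have hdp : G.dist v p + 1 = G.dist v x := hp.2.symm
    by_cases hpB : p ∈ B
    · exact ⟨p, x, hpB, hp, hxB, by omega⟩
    · obtain ⟨p', c', hp', hc', hcB', hlt⟩ := ih p (by omega) hpB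
      exact ⟨p', c', hp', hc', hcB', by omega⟩

lemma ND_anti {B B' : Set V} (h : B ⊆ B') {ℓ : ℕ} : ND G v B' ℓ ⊆ ND G v B ℓ := by
  intro p hp
  simp only [ND, Finset.mem_filter, Finset.mem_univ, true_and] at hp ⊢
  obtain ⟨h1, x, h2, h3⟩ := hp
  exact ⟨h1, x, h2, fun hx => h3 (h hx)⟩

lemma sum_le_tops {q : ℕ} {B : Set V} {ℓ : ℕ} {S : Finset V} (hS : S ⊆ ND G v B ℓ)
    (hq : S.card ≤ q) : ∑ x ∈ S, val G v x ≤ tops G v q B ℓ := by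
  have hmem : S ∈ ((ND G v B ℓ).powerset).filter (fun S => S.card ≤ q) := by
    simp only [Finset.mem_filter, Finset.mem_powerset]
    exact ⟨hS, hq⟩
  exact Finset.le_sup (f := fun S => ∑ x ∈ S, val G v x) hmem

lemma tops_le {q : ℕ} {B : Set V} {ℓ : ℕ} {c : ℕ}
    (h : ∀ S : Finset V, S ⊆ ND G v B ℓ → S.card ≤ q → ∑ x ∈ S, val G v x ≤ c) :
    tops G v q B ℓ ≤ c := by
  apply Finset.sup_le
  intro S hS
  simp only [Finset.mem_filter, Finset.mem_powerset] at hS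
  exact h S hS.1 hS.2

lemma tops_mono {q : ℕ} {B B' : Set V} (h : B ⊆ B') {ℓ : ℕ} :
    tops G v q B' ℓ ≤ tops G v q B ℓ :=
  tops_le fun S hS hq => sum_le_tops (hS.trans (ND_anti h)) hq

lemma price_mono {q : ℕ} {B B' : Set V} (h : B ⊆ B') :
    price G v q B' ≤ price G v q B :=
  Finset.sum_le_sum fun ℓ _ => tops_mono h

lemma degree_congr (G : SimpleGraph V) (x : V) (i1 i2 : Fintype (G.neighborSet x)) :
    @SimpleGraph.degree V G x i1 = @SimpleGraph.degree V G x i2 :=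
  congrArg (fun i => @SimpleGraph.degree V G x i) (Subsingleton.elim i1 i2)

lemma mem_ND {B : Set V} {ℓ : ℕ} {p : V} :
    p ∈ ND G v B ℓ ↔ G.dist v p = ℓ ∧ ∃ x, chd G v p x ∧ x ∉ B := by
  simp [ND]

lemma ncard_step {B C : Set V} (hsub : B ⊆ C) {x : V} (hx : x ∈ C) (hxB : x ∉ B) {n : ℕ}
    (h : (Bᶜ).ncard ≤ n + 1) : (Cᶜ).ncard ≤ n := by
  have h1 : Cᶜ ⊂ Bᶜ :=
    (Set.ssubset_iff_of_subset (Set.compl_subset_compl.mpr hsub)).mpr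
      ⟨x, hxB, Set.not_notMem.mpr hx⟩
  have := Set.ncard_lt_ncard h1 (Set.toFinite _)
  omega

/-- Active vertices: blue with at least two white neighbours. -/
noncomputable def afin (G : SimpleGraph V) (v : V) (B : Set V) : Finset V :=
  Finset.univ.filter (fun a => a ∈ B ∧ 2 ≤ (wnb G B a).card ∧ (v = v))

/-- A chosen white neighbour. -/
noncomputable def pick (G : SimpleGraph V) (v : V) (B : Set V) (a : V) : V :=
  if h : (wnb G B a).Nonempty then h.choose else v

/-- The active vertex Blue uses to force against a returned collection `𝒮`. -/
noncomputable def af (G : SimpleGraph V) (v : V) (B : Set V) (𝒮 : Finset (Set V)) : V :=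
  if h : ∃ a, a ∈ afin G v B ∧ WhiteComp G B (pick G v B a) ∈ 𝒮 then h.choose else v

lemma mem_afin {B : Set V} {a : V} : a ∈ afin G v B ↔ a ∈ B ∧ 2 ≤ (wnb G B a).card := by
  simp [afin]


lemma pick_mem {B : Set V} {a : V} (h : (wnb G B a).Nonempty) :
    pick G v B a ∈ wnb G B a := by
  rw [pick, dif_pos h]; exact h.choose_spec

lemma af_spec {B : Set V} {𝒮 : Finset (Set V)}
    (h : ∃ a, a ∈ afin G v B ∧ WhiteComp G B (pick G v B a) ∈ 𝒮) :
    af G v B 𝒮 ∈ afin G v B ∧ WhiteComp G B (pick G v B (af G v B 𝒮)) ∈ 𝒮 := by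
  rw [af, dif_pos h]; exact h.choose_spec

lemma main_strategy (hT : G.IsTree) (q : ℕ) :
    ∀ n (B : Set V), (Bᶜ).ncard ≤ n → DC G v B → Win G q B (price G v q B) := by
  intro n
  induction n with
  | zero =>
    intro B hB hDC
    refine Win.all _ _ fun x => ?_
    by_contra hx
    have h1 : (Bᶜ).ncard ≠ 0 := by
      intro h0
      rw [Set.ncard_eq_zero (Set.toFinite _)] at h0
      exact absurd (h0 ▸ hx) (Set.notMem_empty x)
    omega
  | succ n ih =>
    intro B hB hDC
    by_cases hall : ∀ x, x ∈ B
    · exact Win.all _ _ hall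
    push_neg at hall
    obtain ⟨x0, hx0⟩ := hall
    by_cases hr2 : ∃ u w, Force G B u w
    · obtain ⟨u, w, hf⟩ := hr2
      obtain ⟨huB, hwB, -, hadj, -⟩ := id hf
      have hchd : chd G v u w := white_child hT hDC huB hwB hadj
      have hDC' := DC_insert hT hDC huB hchd
      have hm : ((insert w B)ᶜ).ncard ≤ n :=
        ncard_step (Set.subset_insert _ _) (Set.mem_insert _ _) hwB hB
      exact Win.rule2 B _ u w hf
        (Win_mono (ih _ hm hDC') _ (price_mono (Set.subset_insert _ _)))
    · have hact : ∀ u, u ∈ B → (wnb G B u).Nonempty → 2 ≤ (wnb G B u).card := by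
        intro u huB hne
        by_contra hlt
        push_neg at hlt
        have h1 : (wnb G B u).card = 1 := by
          have := Finset.card_pos.mpr hne; omega
        obtain ⟨w, hw⟩ := Finset.card_eq_one.mp h1
        have hwmem : w ∈ wnb G B u := by rw [hw]; exact Finset.mem_singleton_self w
        rw [mem_wnb] at hwmem
        exact hr2 ⟨u, w, huB, hwmem.2, Set.mem_univ w, hwmem.1, fun u' hadj' hu' _ => by
          have : u' ∈ wnb G B u := mem_wnb.mpr ⟨hadj', hu'⟩
          rw [hw] at this; exact Finset.mem_singleton.mp this⟩
      have hAne : (afin G v B).Nonempty := by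
        obtain ⟨p, c, hpB, hpc, hcB, -⟩ := blue_frontier hT hDC (G.dist v x0) x0 le_rfl hx0
        exact ⟨p, mem_afin.mpr ⟨hpB, hact p hpB ⟨c, mem_wnb.mpr ⟨hpc.1, hcB⟩⟩⟩⟩
      by_cases hAq : (afin G v B).card ≤ q
      · -- pay for a minimal-level active vertex
        obtain ⟨a, haA, hamin⟩ := (afin G v B).exists_min_image (fun a => G.dist v a) hAne
        obtain ⟨haB, hacard⟩ := mem_afin.mp haA
        set W := wnb G B a with hWdef
        have hWne : W.Nonempty := Finset.card_pos.mp (by omega)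
        obtain ⟨c₀, hc₀⟩ := hWne
        have hWchd : ∀ x ∈ W, chd G v a x ∧ x ∉ B := by
          intro x hx
          rw [hWdef, mem_wnb] at hx
          exact ⟨white_child hT hDC haB hx.2 hx.1, hx.2⟩
        set la := G.dist v a with hla
        -- every not-done vertex at level `la` is active
        have fact1 : ND G v B la ⊆ afin G v B := by
          intro p hp
          obtain ⟨hpl, x, hx1, hx2⟩ := mem_ND.mp hp
          by_cases hpB : p ∈ B
          · exact mem_afin.mpr ⟨hpB, hact p hpB ⟨x, mem_wnb.mpr ⟨hx1.1, hx2⟩⟩⟩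
          · exfalso
            obtain ⟨p', c', hp'B, hp'c, hc'B, hlt⟩ :=
              blue_frontier hT hDC (G.dist v p) p le_rfl hpB
            have hp'A : p' ∈ afin G v B :=
              mem_afin.mpr ⟨hp'B, hact p' hp'B ⟨c', mem_wnb.mpr ⟨hp'c.1, hc'B⟩⟩⟩
            have := hamin p' hp'A
            omega
        have hNDq : (ND G v B la).card ≤ q :=
          le_trans (Finset.card_le_card fact1) hAq
        have haND : a ∈ ND G v B la :=
          mem_ND.mpr ⟨rfl, c₀, (hWchd c₀ hc₀).1, (hWchd c₀ hc₀).2⟩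
        have h_full : ∑ x ∈ ND G v B la, val G v x ≤ tops G v q B la :=
          sum_le_tops (Finset.Subset.refl _) hNDq
        have hub : tops G v q (B ∪ ↑W) la ≤ ∑ x ∈ (ND G v B la).erase a, val G v x := by
          apply tops_le
          intro S hS hq
          apply Finset.sum_le_sum_of_subset
          intro x hx
          have hx1 : x ∈ ND G v B la := ND_anti Set.subset_union_left (hS hx)
          refine Finset.mem_erase.mpr ⟨?_, hx1⟩
          rintro rfl
          obtain ⟨-, y, hy1, hy2⟩ := mem_ND.mp (hS hx)
          have hyW : y ∈ W := mem_wnb.mpr ⟨hy1.1, fun hyB => hy2 (Or.inl hyB)⟩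
          exact hy2 (Or.inr hyW)
        have hval : W.card - 1 ≤ val G v a := by
          by_cases hav : a = v
          · have hsub : W ⊆ G.neighborFinset a := by
              intro x hx; rw [hWdef, mem_wnb] at hx
              exact (G.mem_neighborFinset a x).mpr hx.1
            have := Finset.card_le_card hsub
            rw [G.card_neighborFinset_eq_degree] at this
            rw [val, if_pos hav]
            omega
          · obtain ⟨pa, hpa⟩ := exists_parent hT hav
            have hpaB : pa ∈ B := hDC.2 pa a hpa haB
            have hsub : W ⊆ (G.neighborFinset a).erase pa := by
              intro x hx; rw [hWdef, mem_wnb] at hx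
              refine Finset.mem_erase.mpr ⟨?_, (G.mem_neighborFinset a x).mpr hx.1⟩
              rintro rfl; exact hx.2 hpaB
            have h2 := Finset.card_le_card hsub
            rw [Finset.card_erase_of_mem ((G.mem_neighborFinset a pa).mpr hpa.1.symm),
              G.card_neighborFinset_eq_degree] at h2
            rw [val, if_neg hav]
            omega
        have hsum : val G v a + ∑ x ∈ (ND G v B la).erase a, val G v x
            = ∑ x ∈ ND G v B la, val G v x := Finset.add_sum_erase _ _ haND
        have hkey : price G v q (B ∪ ↑W) + (W.card - 1) ≤ price G v q B := by
          have hlalt : la < Fintype.card V := dist_lt_card hT.isConnected a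
          rw [price, price, ← Finset.sum_erase_add _ _ (Finset.mem_range.mpr hlalt),
            ← Finset.sum_erase_add _ _ (Finset.mem_range.mpr hlalt), add_assoc]
          refine add_le_add (Finset.sum_le_sum fun ℓ _ => tops_mono Set.subset_union_left) ?_
          omega
        -- game play
        have hDCW : DC G v (B ∪ ↑W) :=
          DC_union hT hDC fun x hx => ⟨a, haB, (hWchd x hx).1⟩
        have hmW : (((B : Set V) ∪ ↑W)ᶜ).ncard ≤ n :=
          ncard_step Set.subset_union_left (Or.inr hc₀) (hWchd c₀ hc₀).2 hB
        have hwin2 : Win G q (B ∪ ↑W) (price G v q (B ∪ ↑W)) := ih _ hmW hDCW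
        have hc₀B : c₀ ∉ B ∪ ↑(W.erase c₀) := by
          rintro (h | h)
          · exact (hWchd c₀ hc₀).2 h
          · exact absurd (Finset.mem_coe.mp h) (Finset.notMem_erase c₀ W)
        have hforce : Force G (B ∪ ↑(W.erase c₀)) a c₀ := by
          refine ⟨Or.inl haB, hc₀B, Set.mem_univ _, (hWchd c₀ hc₀).1.1, ?_⟩
          intro u' hadj' hu' _
          have hu'B : u' ∉ B := fun h => hu' (Or.inl h)
          have hu'W : u' ∈ W := mem_wnb.mpr ⟨hadj', hu'B⟩
          by_contra hne
          exact hu' (Or.inr (Finset.mem_coe.mpr (Finset.mem_erase.mpr ⟨hne, hu'W⟩)))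
        have heq : insert c₀ ((B : Set V) ∪ ↑(W.erase c₀)) = B ∪ ↑W := by
          ext u
          simp only [Set.mem_insert_iff, Set.mem_union, Finset.coe_erase, Set.mem_diff,
            Set.mem_singleton_iff, Finset.mem_coe]
          constructor
          · rintro (rfl | h | ⟨h, -⟩)
            · exact Or.inr hc₀
            · exact Or.inl h
            · exact Or.inr h
          · rintro (h | h)
            · exact Or.inr (Or.inl h)
            · by_cases hu : u = c₀
              · exact Or.inl hu
              · exact Or.inr (Or.inr ⟨h, hu⟩)
        have hwin1 : Win G q (B ∪ ↑(W.erase c₀)) (price G v q (B ∪ ↑W)) :=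
          Win.rule2 _ _ a c₀ hforce (heq ▸ hwin2)
        have hwin0 : Win G q B (price G v q (B ∪ ↑W) + (W.erase c₀).card) :=
          rule1_iter _ _ _ hwin1
        refine Win_mono hwin0 _ ?_
        rw [Finset.card_erase_of_mem hc₀]
        exact hkey
      · -- rule 3
        push_neg at hAq
        have hApick : ∀ a ∈ afin G v B, pick G v B a ∈ wnb G B a := by
          intro a ha
          exact pick_mem (Finset.card_pos.mp (by have := (mem_afin.mp ha).2; omega))
        have hAchd : ∀ a ∈ afin G v B, chd G v a (pick G v B a) ∧ pick G v B a ∉ B := by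
          intro a ha
          have h1 := mem_wnb.mp (hApick a ha)
          exact ⟨white_child hT hDC (mem_afin.mp ha).1 h1.2 h1.1, h1.2⟩
        have hinj : Set.InjOn (fun a => WhiteComp G B (pick G v B a)) (afin G v B) := by
          intro a ha0 a' ha0' heq0
          have ha : a ∈ afin G v B := Finset.mem_coe.mp ha0
          have ha' : a' ∈ afin G v B := Finset.mem_coe.mp ha0'
          have heq : WhiteComp G B (pick G v B a) = WhiteComp G B (pick G v B a') := heq0
          by_contra hne
          have h1 : pick G v B a ≠ pick G v B a' := by
            intro h
            exact hne (parent_unique hT (hAchd a ha).1 (h ▸ (hAchd a' ha').1))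
          have hmem : pick G v B a' ∈ WhiteComp G B (pick G v B a) := by
            rw [heq]; exact Relation.ReflTransGen.refl
          exact h1 (root_eq hT (hAchd a ha).2 (mem_afin.mp ha).1 (hAchd a ha).1
            (hAchd a' ha').2 (mem_afin.mp ha').1 (hAchd a' ha').1 hmem).symm
        set 𝒲 := (afin G v B).image (fun a => WhiteComp G B (pick G v B a)) with h𝒲
        have h𝒲card : q + 1 ≤ 𝒲.card := by
          rw [h𝒲, Finset.card_image_of_injOn hinj]; omega
        have h𝒲comp : ∀ W ∈ 𝒲, IsWhiteComp G B W := by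
          intro W hW
          rw [h𝒲, Finset.mem_image] at hW
          obtain ⟨a, ha, rfl⟩ := hW
          exact ⟨pick G v B a, (hAchd a ha).2, rfl⟩
        have hP : ∀ 𝒮 : Finset (Set V), 𝒮 ⊆ 𝒲 → 𝒮.Nonempty →
            ∃ a, a ∈ afin G v B ∧ WhiteComp G B (pick G v B a) ∈ 𝒮 := by
          rintro 𝒮 hsub ⟨W, hWmem⟩
          have h1 := hsub hWmem
          rw [h𝒲, Finset.mem_image] at h1
          obtain ⟨a, ha, rfl⟩ := h1
          exact ⟨a, ha, hWmem⟩
        refine Win.rule3 B _ 𝒲 (af G v B) (fun 𝒮 => pick G v B (af G v B 𝒮)) h𝒲comp h𝒲card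
          ?_ ?_
        · intro 𝒮 hsub hne
          obtain ⟨haf, hafS⟩ := af_spec (hP 𝒮 hsub hne)
          obtain ⟨hafchd, hafpB⟩ := hAchd _ haf
          refine ⟨(mem_afin.mp haf).1, hafpB, ?_, hafchd.1, ?_⟩
          · exact Set.mem_sUnion.mpr ⟨_, Finset.mem_coe.mpr hafS, Relation.ReflTransGen.refl⟩
          · intro u hadj hu hmem
            obtain ⟨W', hW', huW'⟩ := Set.mem_sUnion.mp hmem
            have hW'2 := hsub (Finset.mem_coe.mp hW')
            rw [h𝒲, Finset.mem_image] at hW'2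
            obtain ⟨a', ha', rfl⟩ := hW'2
            have hchu : chd G v (af G v B 𝒮) u :=
              white_child hT hDC (mem_afin.mp haf).1 hu hadj
            have hu_eq : u = pick G v B a' :=
              root_eq hT (hAchd a' ha').2 (mem_afin.mp ha').1 (hAchd a' ha').1
                hu (mem_afin.mp haf).1 hchu huW'
            have ha'eq : a' = af G v B 𝒮 :=
              parent_unique hT (hAchd a' ha').1 (hu_eq ▸ hchu)
            rw [hu_eq, ha'eq]
        · intro 𝒮 hsub hne
          obtain ⟨haf, hafS⟩ := af_spec (hP 𝒮 hsub hne)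
          obtain ⟨hafchd, hafpB⟩ := hAchd _ haf
          have hDC' := DC_insert hT hDC (mem_afin.mp haf).1 hafchd
          have hm : ((insert (pick G v B (af G v B 𝒮)) B)ᶜ).ncard ≤ n :=
            ncard_step (Set.subset_insert _ _) (Set.mem_insert _ _) hafpB hB
          exact Win_mono (ih _ hm hDC') _ (price_mono (Set.subset_insert _ _))


lemma sum_le_sum_top {α : Type*} [DecidableEq α] (f : α → ℕ) (q : ℕ) (S L lvl : Finset α)
    (hS : S ⊆ lvl) (hL : L ⊆ lvl) (hSq : S.card ≤ q) (hLq : L.card = min q lvl.card)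
    (hdom : ∀ b ∈ lvl, b ∉ L → ∀ a ∈ L, f b ≤ f a) :
    ∑ x ∈ S, f x ≤ ∑ x ∈ L, f x := by
  have hSL : S.card ≤ L.card := by
    have h1 := Finset.card_le_card hS
    rw [hLq]
    exact le_min hSq h1
  have hcard2 : (S \ L).card ≤ (L \ S).card := by
    have h1 := Finset.card_sdiff_add_card_inter S L
    have h2 := Finset.card_sdiff_add_card_inter L S
    have h3 : (S ∩ L).card = (L ∩ S).card := by rw [Finset.inter_comm]
    omega
  obtain ⟨T, hTsub, hTcard⟩ := Finset.exists_subset_card_eq hcard2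
  have hstep : ∑ x ∈ S \ L, f x ≤ ∑ x ∈ T, f x := by
    rcases (S \ L).eq_empty_or_nonempty with he | hne
    · simp [he]
    · have hTne : T.Nonempty := Finset.card_pos.mp (by
        rw [hTcard]; exact Finset.card_pos.mpr hne)
      obtain ⟨a₀, ha₀, hmin⟩ := T.exists_min_image f hTne
      have ha₀L : a₀ ∈ L := (Finset.mem_sdiff.mp (hTsub ha₀)).1
      calc ∑ x ∈ S \ L, f x ≤ (S \ L).card • f a₀ := by
            refine Finset.sum_le_card_nsmul _ _ _ ?_
            intro b hb
            have hbS : b ∈ S := (Finset.mem_sdiff.mp hb).1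
            have hbL : b ∉ L := (Finset.mem_sdiff.mp hb).2
            exact hdom b (hS hbS) hbL a₀ ha₀L
        _ = T.card • f a₀ := by rw [hTcard]
        _ ≤ ∑ x ∈ T, f x := Finset.card_nsmul_le_sum _ _ _ hmin
  have hsplit : ∑ x ∈ S, f x = ∑ x ∈ S \ L, f x + ∑ x ∈ S ∩ L, f x := by
    rw [← Finset.sum_sdiff (Finset.inter_subset_left (s₁ := S) (s₂ := L)),
      Finset.sdiff_inter_self_left]
  have hdisj : Disjoint T (S ∩ L) := by
    rw [Finset.disjoint_left]
    intro x hxT hxSL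
    exact (Finset.mem_sdiff.mp (hTsub hxT)).2 (Finset.mem_inter.mp hxSL).1
  have hunion : T ∪ (S ∩ L) ⊆ L := by
    intro x hx
    rcases Finset.mem_union.mp hx with hx | hx
    · exact (Finset.mem_sdiff.mp (hTsub hx)).1
    · exact (Finset.mem_inter.mp hx).2
  calc ∑ x ∈ S, f x = ∑ x ∈ S \ L, f x + ∑ x ∈ S ∩ L, f x := hsplit
    _ ≤ ∑ x ∈ T, f x + ∑ x ∈ S ∩ L, f x := Nat.add_le_add_right hstep _
    _ = ∑ x ∈ T ∪ (S ∩ L), f x := (Finset.sum_union hdisj).symm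
    _ ≤ ∑ x ∈ L, f x := Finset.sum_le_sum_of_subset hunion


end ZqAux

end ZqAux

open SimpleGraph

open SimpleGraph

/-- Upper bound for trees: let `T` be a tree on at least `2` vertices rooted at `v`,
with height `h` (the maximum distance from `v`), and for each level `1 ≤ ℓ ≤ h - 1`
let `L ℓ` be a set of (at most) `q` vertices of largest degree at distance `ℓ` from `v`
(all of them if the level has at most `q` vertices). Then
`Z_q(T) ≤ deg v + ∑_{ℓ=1}^{h-1} ∑_{a ∈ L ℓ} max 0 (deg a - 2)`. -/
theorem Zq_tree_upper {V : Type*} [Fintype V] [DecidableEq V] (G : SimpleGraph V)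
    [DecidableRel G.Adj] (hT : G.IsTree) (hcard : 2 ≤ Fintype.card V) (q : ℕ)
    (v : V) (h : ℕ) (hh : h = Finset.univ.sup (fun u => G.dist v u))
    (L : ℕ → Finset V)
    (hLlevel : ∀ ℓ, ∀ a ∈ L ℓ, G.dist v a = ℓ)
    (hLcard : ∀ ℓ, (L ℓ).card = min q (Finset.univ.filter (fun u => G.dist v u = ℓ)).card)
    (hLmax : ∀ ℓ, ∀ a ∈ L ℓ, ∀ b, G.dist v b = ℓ → b ∉ L ℓ → G.degree b ≤ G.degree a) :
    ZqGame.Zq G q ≤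
      G.degree v + ∑ ℓ ∈ Finset.Icc 1 (h - 1), ∑ a ∈ L ℓ, (G.degree a - 2)  := by
  classical
  have hconn := hT.isConnected
  have hDCv : ZqAux.DC G v {v} := by
    refine ⟨rfl, ?_⟩
    intro p x hpx hx
    exfalso
    have hxv : x = v := hx
    rw [hxv] at hpx
    have := hpx.2
    rw [SimpleGraph.dist_self] at this
    omega
  have hwin : ZqGame.Win G q ({v} : Set V) (ZqAux.price G v q {v}) :=
    ZqAux.main_strategy hT q ((({v} : Set V)ᶜ).ncard) {v} le_rfl hDCv
  have hwin0 : ZqGame.Win G q (∅ : Set V) (ZqAux.price G v q {v} + 1) := by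
    refine ZqGame.Win.rule1 (∅ : Set V) (ZqAux.price G v q {v}) v ?_
    have hins : (insert v (∅ : Set V)) = ({v} : Set V) := by simp
    rwa [hins]
  have hle : ZqGame.Zq G q ≤ ZqAux.price G v q {v} + 1 := Nat.sInf_le hwin0
  refine le_trans hle ?_
  have hdeg : 1 ≤ G.degree v := by
    obtain ⟨u, hu⟩ := Fintype.exists_ne_of_one_lt_card (by omega) v
    obtain ⟨w⟩ := hconn.preconnected v u
    obtain ⟨x, hadj, -, -⟩ := SimpleGraph.Walk.exists_eq_cons_of_ne (Ne.symm hu) w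
    have : 0 < G.degree v := G.degree_pos_iff_exists_adj v |>.mpr ⟨x, hadj⟩
    omega
  have hn0 : 0 < Fintype.card V := by omega
  have hND0 : ZqAux.ND G v ({v} : Set V) 0 ⊆ {v} := by
    intro p hp
    have h1 := (ZqAux.mem_ND.mp hp).1
    rw [Finset.mem_singleton]
    exact ((hconn.dist_eq_zero_iff).mp h1).symm
  have h0 : ZqAux.tops G v q ({v} : Set V) 0 ≤ G.degree v - 1 := by
    apply ZqAux.tops_le
    intro S hSsub hSq
    rcases Finset.subset_singleton_iff.mp (hSsub.trans hND0) with rfl | rfl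
    · simp
    · rw [Finset.sum_singleton, ZqAux.val, if_pos rfl]
      exact Nat.sub_le_sub_right (le_of_eq (ZqAux.degree_congr G v _ _)) 1
  have hbound : ∀ ℓ, 1 ≤ ℓ → ZqAux.tops G v q ({v} : Set V) ℓ ≤
      (if ℓ ∈ Finset.Icc 1 (h - 1) then ∑ a ∈ L ℓ, (G.degree a - 2) else 0) := by
    intro ℓ hℓ
    by_cases hmem : ℓ ∈ Finset.Icc 1 (h - 1)
    · rw [if_pos hmem]
      apply ZqAux.tops_le
      intro S hSsub hSq
      have hSlvl : S ⊆ Finset.univ.filter (fun u => G.dist v u = ℓ) := by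
        intro x hx
        rw [Finset.mem_filter]
        exact ⟨Finset.mem_univ x, (ZqAux.mem_ND.mp (hSsub hx)).1⟩
      have hval_eq : ∀ x ∈ S, ZqAux.val G v x = G.degree x - 2 := by
        intro x hx
        have hdist := (ZqAux.mem_ND.mp (hSsub hx)).1
        have hxv : x ≠ v := by
          rintro rfl
          rw [SimpleGraph.dist_self] at hdist
          omega
        rw [ZqAux.val, if_neg hxv]
        exact congrArg (· - 2) (ZqAux.degree_congr G x _ _)
      rw [Finset.sum_congr rfl hval_eq]
      refine ZqAux.sum_le_sum_top (fun x => G.degree x - 2) q S (L ℓ)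
        (Finset.univ.filter (fun u => G.dist v u = ℓ)) hSlvl ?_ hSq (hLcard ℓ) ?_
      · intro a ha
        rw [Finset.mem_filter]
        exact ⟨Finset.mem_univ a, hLlevel ℓ a ha⟩
      · intro b hb hbL a ha
        have hbd : G.dist v b = ℓ := (Finset.mem_filter.mp hb).2
        exact Nat.sub_le_sub_right (hLmax ℓ a ha b hbd hbL) 2
    · rw [if_neg hmem]
      apply ZqAux.tops_le
      intro S hSsub hSq
      have hempty : ZqAux.ND G v ({v} : Set V) ℓ = ∅ := by
        rw [Finset.eq_empty_iff_forall_notMem]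
        intro p hp
        obtain ⟨hpd, x, hx1, hx2⟩ := ZqAux.mem_ND.mp hp
        have hxh : G.dist v x ≤ h := by rw [hh]; exact Finset.le_sup (Finset.mem_univ x)
        have hx3 := hx1.2
        rw [Finset.mem_Icc] at hmem
        omega
      have hS0 : S = ∅ := Finset.subset_empty.mp (hempty ▸ hSsub)
      simp [hS0]
  have hsplit : ZqAux.price G v q ({v} : Set V) =
      ∑ ℓ ∈ (Finset.range (Fintype.card V)).erase 0, ZqAux.tops G v q ({v} : Set V) ℓ
        + ZqAux.tops G v q ({v} : Set V) 0 := by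
    rw [ZqAux.price, Finset.sum_erase_add _ _ (Finset.mem_range.mpr hn0)]
  have hsum2 : ∑ ℓ ∈ (Finset.range (Fintype.card V)).erase 0,
      ZqAux.tops G v q ({v} : Set V) ℓ ≤
      ∑ ℓ ∈ Finset.Icc 1 (h - 1), ∑ a ∈ L ℓ, (G.degree a - 2) := by
    calc ∑ ℓ ∈ (Finset.range (Fintype.card V)).erase 0, ZqAux.tops G v q ({v} : Set V) ℓ
        ≤ ∑ ℓ ∈ (Finset.range (Fintype.card V)).erase 0,
            (if ℓ ∈ Finset.Icc 1 (h - 1) then ∑ a ∈ L ℓ, (G.degree a - 2) else 0) := by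
          refine Finset.sum_le_sum ?_
          intro ℓ hℓ
          exact hbound ℓ (Nat.one_le_iff_ne_zero.mpr (Finset.mem_erase.mp hℓ).1)
      _ = ∑ ℓ ∈ ((Finset.range (Fintype.card V)).erase 0) ∩ Finset.Icc 1 (h - 1),
            ∑ a ∈ L ℓ, (G.degree a - 2) := Finset.sum_ite_mem _ _ _
      _ ≤ ∑ ℓ ∈ Finset.Icc 1 (h - 1), ∑ a ∈ L ℓ, (G.degree a - 2) :=
          Finset.sum_le_sum_of_subset Finset.inter_subset_right
  have hfin : ZqAux.price G v q ({v} : Set V) + 1 ≤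
      (∑ ℓ ∈ Finset.Icc 1 (h - 1), ∑ a ∈ L ℓ, (G.degree a - 2)) + (G.degree v - 1) + 1 := by
    rw [hsplit]
    exact Nat.add_le_add_right (Nat.add_le_add hsum2 h0) 1
  refine le_trans hfin ?_
  have : G.degree v - 1 + 1 = G.degree v := Nat.succ_pred_eq_of_pos hdeg
  calc (∑ ℓ ∈ Finset.Icc 1 (h - 1), ∑ a ∈ L ℓ, (G.degree a - 2)) + (G.degree v - 1) + 1
      = (∑ ℓ ∈ Finset.Icc 1 (h - 1), ∑ a ∈ L ℓ, (G.degree a - 2)) + G.degree v := by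
        rw [Nat.add_assoc, this]
    _ = G.degree v + ∑ ℓ ∈ Finset.Icc 1 (h - 1), ∑ a ∈ L ℓ, (G.degree a - 2) :=
        Nat.add_comm _ _
    _ ≤ G.degree v + ∑ ℓ ∈ Finset.Icc 1 (h - 1), ∑ a ∈ L ℓ, (G.degree a - 2) := le_rfl
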